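/- Let Γ be a divisible ordered abelian group, Δ a divisible subgroup of Γ, S an ordered set, and ι : Δ → ℝ((t^S)) a truncation closed, cross sectional ordered group embedding into the Hahn group of real-coefficient formal series over S. Then for any x, y in Γ \ Δ realizing the same cut over Δ, the (maximal) developments of x and y over Δ with respect to ι are equal. -/

import Mathlib

open scoped Classical

/-! Hahn groups `ℝ((t^S))` over a linearly ordered set `S`, realized as `HahnSeries Sᵒᵈ ℝ`
(exponents are dualized so that the decreasing series of the classical notation have
well-ordered support), together with developments of elements of an ordered abelian
group `Γ` over a subgroup `Δ` embedded in the Hahn group. -/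

variable {S : Type*} [LinearOrder S] {Γ : Type*} [AddCommGroup Γ] [LinearOrder Γ] [IsOrderedAddMonoid Γ]

/-- `a ≺ b` : `n|a| < |b|` for every natural number `n`. -/
def GPrec (a b : Γ) : Prop := ∀ n : ℕ, n • |a| < |b|

/-- `a ⪯ b` : `|a| < n|b|` for some natural number `n`. -/
def GPreceq (a b : Γ) : Prop := ∃ n : ℕ, |a| < n • |b|

/-- Archimedean equivalence. -/
def GEquiv (a b : Γ) : Prop := GPreceq a b ∧ GPreceq b a

/-- A Hahn series is positive when its leading coefficient is positive. -/
def HPosS (h : HahnSeries Sᵒᵈ ℝ) : Prop :=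
  ∃ g, 0 < h.coeff g ∧ ∀ g' < g, h.coeff g' = 0

/-- The (lexicographic) ordering of the Hahn group. -/
def HLtS (h k : HahnSeries Sᵒᵈ ℝ) : Prop := HPosS (k - h)

/-- `d` is a truncation (initial segment of terms) of the Hahn series `h`. -/
def IsTruncS (d h : HahnSeries Sᵒᵈ ℝ) : Prop :=
  ∃ U : Set S, IsUpperSet U ∧
    ∀ s : S, d.coeff (OrderDual.toDual s) = if s ∈ U then h.coeff (OrderDual.toDual s) else 0

/-- The truncation of `z` keeping all terms with exponent `≥ s`. -/
noncomputable def truncFrom (z : HahnSeries Sᵒᵈ ℝ) (s : S) : HahnSeries Sᵒᵈ ℝ where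
  coeff g := if s ≤ OrderDual.ofDual g then z.coeff g else 0
  isPWO_support' := z.isPWO_support.mono (fun g hg => by
    simp only [Function.mem_support] at hg ⊢
    intro h0
    apply hg
    simp [h0])

variable (Δ : AddSubgroup Γ) (ι : Δ → HahnSeries Sᵒᵈ ℝ)

/-- `ι` is a truncation closed, cross sectional ordered group embedding of `Δ`
into the Hahn group. -/
structure GoodEmbedding : Prop where
  add : ∀ a b : Δ, ι (a + b) = ι a + ι b
  mono : ∀ a b : Δ, ((a : Γ) < b ↔ HLtS (ι a) (ι b))
  trunc_closed : ∀ (d : Δ) (w : HahnSeries Sᵒᵈ ℝ), IsTruncS w (ι d) → ∃ d' : Δ, ι d' = w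
  cross : ∀ s : S, ∃ d : Δ, ι d = HahnSeries.single (OrderDual.toDual s) 1

/-- `z` is a partial development of `y` over `Δ` with respect to `ι`. -/
def IsPartialDev (y : Γ) (z : HahnSeries Sᵒᵈ ℝ) : Prop :=
  ∀ s : S, z.coeff (OrderDual.toDual s) ≠ 0 →
    ∃ d e : Δ, ι d = truncFrom z s ∧ ι e = HahnSeries.single (OrderDual.toDual s) 1 ∧
      GPrec ((d : Γ) - y) (e : Γ)

/-- `z` is the (maximal) development of `y` over `Δ` with respect to `ι`. -/
def IsDevelopment (y : Γ) (z : HahnSeries Sᵒᵈ ℝ) : Prop :=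
  IsPartialDev Δ ι y z ∧ ∀ z', IsPartialDev Δ ι y z' → IsTruncS z' z

/-- Mutual truncation implies equality. -/
lemma truncS_antisymm (a b : HahnSeries Sᵒᵈ ℝ) (h1 : IsTruncS a b) (h2 : IsTruncS b a) :
    a = b := by
  obtain ⟨U, -, hU⟩ := h1
  obtain ⟨V, -, hV⟩ := h2
  ext g
  have hUg := hU (OrderDual.ofDual g)
  have hVg := hV (OrderDual.ofDual g)
  by_cases hu : OrderDual.ofDual g ∈ U
  · simpa [hu] using hUg
  · simp only [hu, if_neg, if_false] at hUg
    by_cases hv : OrderDual.ofDual g ∈ V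
    · simp only [hv, if_pos] at hVg
      exact hUg.trans (hVg.trans hUg).symm
    · simp only [hv, if_neg, if_false] at hVg
      exact hUg.trans hVg.symm

/-- Same-cut elements satisfy the same `GPrec` estimates against `Δ`. -/
lemma cut_gprec (hΔdiv : ∀ n : ℕ, 0 < n → ∀ d ∈ Δ, ∃ d' ∈ Δ, n • d' = d)
    (x y : Γ) (hx : x ∉ Δ) (hy : y ∉ Δ)
    (hcut : ∀ d : Δ, ((d : Γ) < x ↔ (d : Γ) < y))
    (d e : Δ) (h : GPrec ((d : Γ) - x) (e : Γ)) : GPrec ((d : Γ) - y) (e : Γ) := by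
  have habs : |(e : Γ)| ∈ Δ := by
    rcases abs_choice (e : Γ) with h' | h' <;> rw [h']
    · exact e.2
    · exact Δ.neg_mem e.2
  have hepos : (0 : Γ) < |(e : Γ)| :=
    lt_of_le_of_lt (abs_nonneg _) (by simpa using h 1)
  intro n
  obtain ⟨e', he'mem, he'⟩ := hΔdiv (2 * (n + 1)) (by positivity) |(e : Γ)| habs
  have he'pos : (0 : Γ) < e' := by
    by_contra hc
    push_neg at hc
    have : (2 * (n + 1)) • e' ≤ 0 := nsmul_nonpos hc _
    rw [he'] at this
    exact absurd hepos (not_lt.2 this)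
  have hdx : |(d : Γ) - x| < e' := by
    by_contra hc
    push_neg at hc
    have := nsmul_le_nsmul_right hc (2 * (n + 1))
    rw [he'] at this
    exact absurd (h (2 * (n + 1))) (not_lt.2 this)
  rw [abs_sub_lt_iff] at hdx
  set ed : Δ := ⟨e', he'mem⟩
  have hco1 : ((d - ed : Δ) : Γ) = (d : Γ) - e' := rfl
  have hco2 : ((d + ed : Δ) : Γ) = (d : Γ) + e' := rfl
  have h1 : ((d - ed : Δ) : Γ) < x := by rw [hco1]; exact sub_lt_comm.mp hdx.1
  have h2 : x < ((d + ed : Δ) : Γ) := by rw [hco2]; exact sub_lt_iff_lt_add'.mp hdx.2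
  have h1' : ((d - ed : Δ) : Γ) < y := (hcut _).1 h1
  have h2' : y < ((d + ed : Δ) : Γ) := by
    have hne : y ≠ ((d + ed : Δ) : Γ) := fun hEq => hy (hEq ▸ (d + ed).2)
    have hle : ¬ (((d + ed : Δ) : Γ) < y) := (hcut (d + ed)).not.1 (not_lt.2 h2.le)
    exact lt_of_le_of_ne (not_lt.1 hle) hne
  rw [hco1] at h1'
  rw [hco2] at h2'
  have hdy : |(d : Γ) - y| < e' :=
    abs_sub_lt_iff.mpr ⟨sub_lt_comm.mp h1', sub_lt_iff_lt_add'.mpr h2'⟩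
  calc n • |(d : Γ) - y| ≤ n • e' := nsmul_le_nsmul_right hdy.le n
    _ < (2 * (n + 1)) • e' := by
        apply nsmul_lt_nsmul_left he'pos
        omega
    _ = |(e : Γ)| := he'

lemma partialDev_of_cut (hΔdiv : ∀ n : ℕ, 0 < n → ∀ d ∈ Δ, ∃ d' ∈ Δ, n • d' = d)
    (x y : Γ) (hx : x ∉ Δ) (hy : y ∉ Δ)
    (hcut : ∀ d : Δ, ((d : Γ) < x ↔ (d : Γ) < y))
    (z : HahnSeries Sᵒᵈ ℝ) (hz : IsPartialDev Δ ι x z) : IsPartialDev Δ ι y z := by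
  intro s hs
  obtain ⟨d, e, hd, he, hp⟩ := hz s hs
  exact ⟨d, e, hd, he, cut_gprec Δ hΔdiv x y hx hy hcut d e hp⟩

/-- The development of an element of `Γ \ Δ` over `Δ` only depends on the cut it
realizes over `Δ`. -/
theorem development_depends_only_on_cut
    (hΓdiv : ∀ n : ℕ, 0 < n → ∀ g : Γ, ∃ g', n • g' = g)
    (hΔdiv : ∀ n : ℕ, 0 < n → ∀ d ∈ Δ, ∃ d' ∈ Δ, n • d' = d)
    (hι : GoodEmbedding Δ ι)
    (x y : Γ) (hx : x ∉ Δ) (hy : y ∉ Δ)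
    (hcut : ∀ d : Δ, ((d : Γ) < x ↔ (d : Γ) < y)) :
    ∀ zx zy : HahnSeries Sᵒᵈ ℝ,
      IsDevelopment Δ ι x zx → IsDevelopment Δ ι y zy → zx = zy := by
  intro zx zy hzx hzy
  have hxy := partialDev_of_cut Δ ι hΔdiv x y hx hy hcut zx hzx.1
  have hyx := partialDev_of_cut Δ ι hΔdiv y x hy hx (fun d => (hcut d).symm) zy hzy.1
  exact truncS_antisymm zx zy (hzy.2 zx hxy) (hzx.2 zy hyx)
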